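/- If the σ-martingale measure Q with square-integrable density satisfies the reverse Hölder inequality R_2(P) with constant C (i.e., E[Z_T^2 | F_τ] ≤ C Z_τ^2 for all stopping times τ ≤ T), then the pure-investment value process satisfies V^0_t(1) ≥ 1/C > 0 for all t P-a.s. -/

import Mathlib

open MeasureTheory

/-- Lemma 2.1, second part.  `ZT = dQ/dP` is the square-integrable
density of an equivalent σ-martingale measure `Q` for `S` (σ-martingale property
encoded by `hQmart`), which satisfies the reverse Hölder inequality `R₂(P)` with
constant `C` over all `[0,T]`-valued stopping times (`hR2`).  `V t` is the
pure-investment value `V⁰_t(1) = essinf_ϑ E[(1 + ∫_t^T ϑ dS)² | F_t]`, characterised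
as the greatest a.e. lower bound.  Conclusion: `V⁰_t(1) ≥ 1/C > 0` a.s. for all `t`. -/
theorem reverse_Holder_implies_value_bounded_below
    {Ω : Type*} {m : MeasurableSpace Ω} (μ : Measure Ω) [IsProbabilityMeasure μ]
    (F : Filtration ℝ m) (T : ℝ) (hT : 0 ≤ T)
    (ZT : Ω → ℝ) (hZpos : ∀ᵐ ω ∂μ, 0 < ZT ω) (hZ2 : MemLp ZT 2 μ)
    (hZ1 : ∫ ω, ZT ω ∂μ = 1)
    (C : ℝ) (hC : 0 < C)
    (hR2 : ∀ (τ : Ω → ℝ) (hτ : IsStoppingTime F (fun ω => (τ ω : WithTop ℝ))), (∀ ω, τ ω ∈ Set.Icc 0 T) →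
      μ[fun ω => (ZT ω) ^ 2 | hτ.measurableSpace] ≤ᵐ[μ]
        fun ω => C * ((μ[ZT | hτ.measurableSpace]) ω) ^ 2)
    (Θ : Type*) (Gfrom : Θ → ℝ → Ω → ℝ)
    (hG2 : ∀ ϑ t, MemLp (Gfrom ϑ t) 2 μ)
    (hQmart : ∀ (ϑ : Θ) (t : ℝ), 0 ≤ t → t ≤ T →
      μ[fun ω => ZT ω * Gfrom ϑ t ω | F t] =ᵐ[μ] 0)
    (V : ℝ → Ω → ℝ)
    (hVle : ∀ t ϑ, V t ≤ᵐ[μ] μ[fun ω => (1 + Gfrom ϑ t ω) ^ 2 | F t])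
    (hVglb : ∀ t (W : Ω → ℝ),
      (∀ ϑ : Θ, W ≤ᵐ[μ] μ[fun ω => (1 + Gfrom ϑ t ω) ^ 2 | F t]) → W ≤ᵐ[μ] V t) :
    ∀ t, 0 ≤ t → t ≤ T → ∀ᵐ ω ∂μ, 1 / C ≤ V t ω := by
  intro t ht0 htT
  have hmle : (F t : MeasurableSpace Ω) ≤ m := F.le t
  have hZint : Integrable ZT μ := hZ2.integrable (by norm_num)
  have hZsq : Integrable (fun ω => ZT ω ^ 2) μ := hZ2.integrable_sq
  set Y : Ω → ℝ := μ[ZT | F t] with hYdef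
  have hYmeas : StronglyMeasurable[F t] Y := stronglyMeasurable_condExp
  -- Y > 0 a.e.
  have hYpos : ∀ᵐ ω ∂μ, 0 < Y ω := by
    have hAmeas : MeasurableSet[F t] {ω | Y ω ≤ 0} :=
      hYmeas.measurable measurableSet_Iic
    rw [ae_iff]
    have hAeq : {ω | ¬ 0 < Y ω} = {ω | Y ω ≤ 0} := by ext ω; simp [not_lt]
    rw [hAeq]
    by_contra hA0
    have h1 : ∫ ω in {ω | Y ω ≤ 0}, Y ω ∂μ = ∫ ω in {ω | Y ω ≤ 0}, ZT ω ∂μ :=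
      setIntegral_condExp hmle hZint hAmeas
    have h2 : ∫ ω in {ω | Y ω ≤ 0}, Y ω ∂μ ≤ 0 :=
      setIntegral_nonpos (hmle _ hAmeas) fun ω hω => hω
    have h3 : 0 < ∫ ω in {ω | Y ω ≤ 0}, ZT ω ∂μ := by
      rw [setIntegral_pos_iff_support_of_nonneg_ae
        ((ae_restrict_of_ae (hZpos.mono fun ω h => h.le)))
        (hZint.integrableOn)]
      refine lt_of_lt_of_le ?_ (measure_mono_ae
        (hZpos.mono fun ω hω hA => ⟨ne_of_gt hω, hA⟩))
      exact (zero_le).lt_of_ne (Ne.symm hA0)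
    linarith [h1 ▸ h2]
  -- reverse Hölder at the constant stopping time t
  have hR2t : μ[fun ω => ZT ω ^ 2 | F t] ≤ᵐ[μ] fun ω => C * (Y ω) ^ 2 := by
    have := hR2 (fun _ => t) (isStoppingTime_const F t) (fun ω => ⟨ht0, htT⟩)
    simpa [IsStoppingTime.measurableSpace_const] using this
  -- the truncated multipliers
  set Λ : ℕ → Ω → ℝ := fun n ω => max 0 (min ((C * Y ω)⁻¹) n) with hΛdef
  have hΛmeas : ∀ n, StronglyMeasurable[F t] (Λ n) := by
    intro n
    refine Measurable.stronglyMeasurable ?_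
    exact measurable_const.max (((measurable_const.mul hYmeas.measurable).inv).min
      measurable_const)
  have hΛnonneg : ∀ n ω, 0 ≤ Λ n ω := fun n ω => le_max_left _ _
  have hΛbd : ∀ n ω, ‖Λ n ω‖ ≤ n := by
    intro n ω
    rw [Real.norm_eq_abs, abs_of_nonneg (hΛnonneg n ω)]
    exact max_le (Nat.cast_nonneg n) (min_le_right _ _)
  -- main bound for each strategy
  have main : ∀ ϑ : Θ, (fun _ => 1 / C) ≤ᵐ[μ] μ[fun ω => (1 + Gfrom ϑ t ω) ^ 2 | F t] := by
    intro ϑ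
    set G : Ω → ℝ := Gfrom ϑ t with hGdef
    set H : Ω → ℝ := fun ω => 1 + G ω with hHdef
    have hH2 : MemLp H 2 μ := by
      have := (memLp_const (1:ℝ) (μ := μ) (p := 2)).add (hG2 ϑ t)
      exact this
    have hHsq : Integrable (fun ω => H ω ^ 2) μ := hH2.integrable_sq
    have hZH : Integrable (fun ω => ZT ω * H ω) μ := by
      have h : MemLp (ZT • H) 1 μ :=
        hH2.smul hZ2 (hpqr := ⟨by norm_num [ENNReal.inv_two_add_inv_two, one_div]⟩)
      exact memLp_one_iff_integrable.mp h
    have hZG : Integrable (fun ω => ZT ω * G ω) μ := by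
      have h : MemLp (ZT • G) 1 μ :=
        (hG2 ϑ t).smul hZ2 (hpqr := ⟨by norm_num [ENNReal.inv_two_add_inv_two, one_div]⟩)
      exact memLp_one_iff_integrable.mp h
    -- condexp of Z·H is Y
    have hZH_eq : μ[fun ω => ZT ω * H ω | F t] =ᵐ[μ] Y := by
      have h1 : (fun ω => ZT ω * H ω) = (fun ω => ZT ω) + (fun ω => ZT ω * G ω) := by
        funext ω; simp [H]; ring
      calc μ[fun ω => ZT ω * H ω | F t]
          = μ[(fun ω => ZT ω) + (fun ω => ZT ω * G ω) | F t] := by rw [h1]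
        _ =ᵐ[μ] μ[(fun ω => ZT ω) | F t] + μ[(fun ω => ZT ω * G ω) | F t] :=
            condExp_add hZint hZG _
        _ =ᵐ[μ] Y + 0 := Filter.EventuallyEq.add (by rfl) (hQmart ϑ t ht0 htT)
        _ = Y := by simp
    -- per-n key inequality
    have key : ∀ n : ℕ, ∀ᵐ ω ∂μ,
        2 * Λ n ω * Y ω - Λ n ω * Λ n ω * (C * Y ω ^ 2)
          ≤ (μ[fun ω => (1 + Gfrom ϑ t ω) ^ 2 | F t]) ω := by
      intro n
      have hLm := hΛmeas n
      have hLm' : AEStronglyMeasurable (Λ n) μ := (hLm.mono hmle).aestronglyMeasurable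
      have hg1 : Integrable (fun ω => Λ n ω * (ZT ω * H ω)) μ :=
        hZH.bdd_mul hLm' (c := n) (Filter.Eventually.of_forall (hΛbd n))
      have hg2 : Integrable (fun ω => (Λ n ω * Λ n ω) * ZT ω ^ 2) μ := by
        refine hZsq.bdd_mul (hLm'.mul hLm') (c := (n:ℝ) * n) (Filter.Eventually.of_forall fun ω => ?_)
        rw [norm_mul]
        exact mul_le_mul (hΛbd n ω) (hΛbd n ω) (norm_nonneg _)
          (Nat.cast_nonneg n)
      have hfn : Integrable ((2:ℝ) • (fun ω => Λ n ω * (ZT ω * H ω))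
          - fun ω => (Λ n ω * Λ n ω) * ZT ω ^ 2) μ := (hg1.smul 2).sub hg2
      have hptwise : ((2:ℝ) • (fun ω => Λ n ω * (ZT ω * H ω))
          - fun ω => (Λ n ω * Λ n ω) * ZT ω ^ 2) ≤ᵐ[μ] fun ω => H ω ^ 2 := by
        refine Filter.Eventually.of_forall fun ω => ?_
        simp only [Pi.sub_apply, Pi.smul_apply, smul_eq_mul]
        nlinarith [sq_nonneg (H ω - Λ n ω * ZT ω)]
      have hmono := condExp_mono (m := F t) hfn hHsq hptwise
      -- linearity
      have e0 : μ[((2:ℝ) • (fun ω => Λ n ω * (ZT ω * H ω))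
            - fun ω => (Λ n ω * Λ n ω) * ZT ω ^ 2) | F t]
          =ᵐ[μ] (2:ℝ) • μ[(fun ω => Λ n ω * (ZT ω * H ω)) | F t]
            - μ[(fun ω => (Λ n ω * Λ n ω) * ZT ω ^ 2) | F t] := by
        refine (condExp_sub (hg1.smul (2:ℝ)) hg2 _).trans ?_
        exact Filter.EventuallyEq.sub (condExp_smul (2:ℝ) _ _) (by rfl)
      have e1 : μ[(fun ω => Λ n ω * (ZT ω * H ω)) | F t]
          =ᵐ[μ] Λ n * μ[(fun ω => ZT ω * H ω) | F t] :=
        condExp_stronglyMeasurable_mul_of_bound hmle hLm hZH n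
          (Filter.Eventually.of_forall (hΛbd n))
      have e2 : μ[(fun ω => (Λ n ω * Λ n ω) * ZT ω ^ 2) | F t]
          =ᵐ[μ] (Λ n * Λ n) * μ[(fun ω => ZT ω ^ 2) | F t] :=
        condExp_stronglyMeasurable_mul_of_bound hmle (hLm.mul hLm) hZsq ((n:ℝ) * n)
          (Filter.Eventually.of_forall fun ω => by
            show ‖Λ n ω * Λ n ω‖ ≤ (n:ℝ) * n
            rw [norm_mul]
            exact mul_le_mul (hΛbd n ω) (hΛbd n ω) (norm_nonneg _) (Nat.cast_nonneg n))
      have hHG : μ[fun ω => (1 + Gfrom ϑ t ω) ^ 2 | F t] = μ[fun ω => H ω ^ 2 | F t] := rfl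
      rw [hHG]
      filter_upwards [hmono, e0, e1, e2, hZH_eq, hR2t] with ω h1 h2 h3 h4 h5 h6
      have hZsqnn : Λ n ω * Λ n ω * (μ[(fun ω => ZT ω ^ 2) | F t]) ω
          ≤ Λ n ω * Λ n ω * (C * Y ω ^ 2) :=
        mul_le_mul_of_nonneg_left h6 (mul_nonneg (hΛnonneg n ω) (hΛnonneg n ω))
      have := h1
      rw [h2] at this
      simp only [Pi.sub_apply, Pi.smul_apply, Pi.mul_apply, smul_eq_mul, h3, h4, h5] at this
      nlinarith [this, hZsqnn]
    -- combine over all n and conclude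
    filter_upwards [MeasureTheory.ae_all_iff.2 key, hYpos] with ω hk hy
    set nn : ℕ := ⌈(C * Y ω)⁻¹⌉₊ with hnn
    have hinv_nonneg : 0 ≤ (C * Y ω)⁻¹ := by positivity
    have hLval : Λ nn ω = (C * Y ω)⁻¹ := by
      rw [hΛdef]
      simp only []
      rw [min_eq_left (Nat.le_ceil _), max_eq_right hinv_nonneg]
    have hkey := hk nn
    rw [hLval] at hkey
    have hCY : C * Y ω ≠ 0 := by positivity
    have hval : 2 * (C * Y ω)⁻¹ * Y ω - (C * Y ω)⁻¹ * (C * Y ω)⁻¹ * (C * Y ω ^ 2)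
        = 1 / C := by
      field_simp
      ring
    rw [hval] at hkey
    exact hkey
  have := hVglb t (fun _ => 1 / C) main
  filter_upwards [this] with ω h
  exact h
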